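/- arXiv:math/0003152 — 2 statements merged into one kernel-verified Lean document; each statement's English description precedes it below -/
import Mathlib

section
/- Let A be a C*-algebra, φ a bounded linear functional on A with polar decomposition φ = u|φ| (where u is a partial isometry in A'' and |φ| is the absolute value of φ), and a an element of the unit ball of A. Then ‖φ − a·|φ|‖ ≤ (2‖φ‖)^{1/2} · |‖φ‖ − φ*(a)|^{1/2}. -/
open scoped ComplexOrder

lemma herm_aux {B : Type*} [CStarAlgebra B] (ψ : B →L[ℂ] ℂ)
    (hψ : ∀ b : B, 0 ≤ ψ (star b * b)) (y z : B) :
    ψ (star z * y) = starRingEnd ℂ (ψ (star y * z)) := by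
  have him : ∀ b : B, (ψ (star b * b)).im = 0 := fun b => ((Complex.nonneg_iff.mp (hψ b)).2).symm
  have h1 := him (y + z)
  have h2 := him (y + Complex.I • z)
  simp only [star_add, add_mul, mul_add, star_smul, smul_mul_assoc, mul_smul_comm, neg_mul,
    neg_smul, map_neg, map_add, map_smul, Complex.star_def, Complex.conj_I,
    smul_eq_mul] at h1 h2
  have hy := him y
  have hz := him z
  simp only [Complex.add_im, Complex.mul_im, Complex.neg_im, Complex.I_re, Complex.I_im,
    Complex.neg_re, Complex.mul_re] at h1 h2
  apply Complex.ext <;> simp [Complex.conj_re, Complex.conj_im] <;> nlinarith [hy, hz, h1, h2]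

lemma cs_aux {B : Type*} [CStarAlgebra B] (ψ : B →L[ℂ] ℂ)
    (hψ : ∀ b : B, 0 ≤ ψ (star b * b)) (y z : B) :
    ‖ψ (star y * z)‖ ^ 2 ≤ (ψ (star y * y)).re * (ψ (star z * z)).re := by
  set α : ℂ := ψ (star y * z) with hα
  set P : ℝ := (ψ (star y * y)).re with hP
  set Q : ℝ := (ψ (star z * z)).re with hQ
  have hP0 : 0 ≤ P := (Complex.nonneg_iff.mp (hψ y)).1
  have hQ0 : 0 ≤ Q := (Complex.nonneg_iff.mp (hψ z)).1
  have key : ∀ t : ℝ, 0 ≤ P * t ^ 2 + 2 * Complex.normSq α * t + Complex.normSq α * Q := by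
    intro t
    have h := (Complex.nonneg_iff.mp (hψ ((t : ℂ) • y + (starRingEnd ℂ α) • z))).1
    simp only [star_add, add_mul, mul_add, star_smul, smul_mul_assoc, mul_smul_comm,
      map_add, map_smul, Complex.star_def, RingHom.id_apply, Complex.conj_conj,
      smul_eq_mul, Complex.conj_ofReal] at h
    rw [herm_aux ψ hψ y z, ← hα] at h
    have him_y := (Complex.nonneg_iff.mp (hψ y)).2
    have him_z := (Complex.nonneg_iff.mp (hψ z)).2
    simp only [Complex.add_re, Complex.mul_re, Complex.mul_im, Complex.conj_re, Complex.conj_im,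
      Complex.ofReal_re, Complex.ofReal_im, ← him_y, ← him_z, Complex.normSq_apply] at h ⊢
    nlinarith [h]
  rw [Complex.sq_norm]
  by_cases h0 : Complex.normSq α = 0
  · rw [h0]; positivity
  · have hd := discrim_le_zero (a := P) (b := 2 * Complex.normSq α) (c := Complex.normSq α * Q) (fun x => by rw [← sq]; exact key x)
    have hpos : 0 < Complex.normSq α := lt_of_le_of_ne (Complex.normSq_nonneg α) (Ne.symm h0)
    rw [discrim] at hd
    nlinarith [hd, hpos]

/-- Right translate of a functional: `(a · ψ) x = ψ (x * a)`. -/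
noncomputable def rightMulFunctional {A : Type*} [NonUnitalCStarAlgebra A]
    (ψ : A →L[ℂ] ℂ) (a : A) : A →L[ℂ] ℂ :=
  ψ.comp ((ContinuousLinearMap.mul ℂ A).flip a)

/-- For a functional `φ` on a C*-algebra `A` with polar decomposition `φ = u |φ|`
(the partial isometry `u` living in the enveloping von Neumann algebra `A''`,
here modelled by a unital C*-algebra `B` in which `A` embeds isometrically and
to which `φ` extends with the same norm), and `a` in the unit ball of `A`:
`‖φ - a·|φ|‖ ≤ (2‖φ‖)^{1/2} |‖φ‖ - φ*(a)|^{1/2}` where `φ*(x) = conj (φ (star x))`. -/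
theorem norm_sub_rightMul_absValue_le
    {A : Type*} [NonUnitalCStarAlgebra A] {B : Type*} [CStarAlgebra B]
    (ι : A →⋆ₙₐ[ℂ] B) (hι : ∀ x, ‖ι x‖ = ‖x‖)
    (φ absφ : A →L[ℂ] ℂ) (Φ absΦ : B →L[ℂ] ℂ) (u : B)
    (hΦ : ∀ x, Φ (ι x) = φ x) (hΦnorm : ‖Φ‖ = ‖φ‖)
    (hu : u * star u * u = u) (hu1 : ‖u‖ ≤ 1)
    (habsΦpos : ∀ b : B, 0 ≤ absΦ (star b * b)) (habsΦnorm : ‖absΦ‖ = ‖φ‖)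
    (hpolar : ∀ b : B, Φ b = absΦ (b * u))
    (habs : ∀ b : B, absΦ b = Φ (b * star u))
    (habsφ : ∀ x, absφ x = absΦ (ι x))
    (a : A) (ha : ‖a‖ ≤ 1) :
    ‖φ - rightMulFunctional absφ a‖ ≤
      Real.sqrt (2 * ‖φ‖) *
        Real.sqrt ‖(‖φ‖ : ℂ) - starRingEnd ℂ (φ (star a))‖ := by
  set c : B := ι a with hc
  set δ : ℂ := (‖φ‖ : ℂ) - starRingEnd ℂ (φ (star a)) with hδ
  have hφ0 : 0 ≤ ‖φ‖ := norm_nonneg φ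
  -- pointwise formula
  have hpt : ∀ x : A, (φ - rightMulFunctional absφ a) x = absΦ (ι x * (u - c)) := by
    intro x
    simp only [ContinuousLinearMap.sub_apply, rightMulFunctional, ContinuousLinearMap.comp_apply,
      ContinuousLinearMap.flip_apply, ContinuousLinearMap.mul_apply']
    rw [mul_sub, map_sub, ← hpolar (ι x), hΦ, hc, ← map_mul, ← habsφ]
  -- the key second factor bound
  have hermc : absΦ (star c * u) = φ (star a) := by
    rw [← hΦ (star a), hpolar (ι (star a)), map_star, hc]
  have hcnorm : ‖c‖ ≤ 1 := by rw [hc, hι]; exact ha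
  have hre_le : ∀ b : B, ‖b‖ ≤ 1 → (absΦ (star b * b)).re ≤ ‖φ‖ := by
    intro b hb
    calc (absΦ (star b * b)).re ≤ ‖absΦ (star b * b)‖ := Complex.re_le_norm _
      _ ≤ ‖absΦ‖ * ‖star b * b‖ := absΦ.le_opNorm _
      _ ≤ ‖φ‖ * (‖star b‖ * ‖b‖) :=
          mul_le_mul (le_of_eq habsΦnorm) (norm_mul_le _ _) (norm_nonneg _) hφ0
      _ ≤ ‖φ‖ * 1 := by
          apply mul_le_mul_of_nonneg_left _ hφ0
          rw [norm_star]
          nlinarith [norm_nonneg b]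
      _ = ‖φ‖ := mul_one _
  have hE : (absΦ (star (u - c) * (u - c))).re ≤ 2 * ‖δ‖ := by
    have expand : star (u - c) * (u - c)
        = star u * u - star u * c - star c * u + star c * c := by
      rw [star_sub]; noncomm_ring
    have hherm : absΦ (star u * c) = starRingEnd ℂ (absΦ (star c * u)) :=
      herm_aux absΦ habsΦpos c u
    have hre : (absΦ (star (u - c) * (u - c))).re
        = (absΦ (star u * u)).re + (absΦ (star c * c)).re - 2 * (φ (star a)).re := by
      rw [expand, map_add, map_sub, map_sub, hherm, hermc]
      simp [Complex.sub_re, Complex.add_re, Complex.conj_re]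
      ring
    have hδre : ‖φ‖ - (φ (star a)).re = δ.re := by
      simp [hδ, Complex.sub_re, Complex.conj_re]
    have h1 := hre_le u hu1
    have h2 := hre_le c hcnorm
    have h3 : δ.re ≤ ‖δ‖ := Complex.re_le_norm δ
    rw [hre]
    nlinarith [h1, h2, h3, hδre]
  -- pointwise norm bound
  apply ContinuousLinearMap.opNorm_le_bound _ (by positivity)
  intro x
  rw [hpt x]
  have hcs := cs_aux absΦ habsΦpos (star (ι x)) (u - c)
  rw [star_star] at hcs
  have hfirst : (absΦ (ι x * star (ι x))).re ≤ ‖φ‖ * ‖x‖ ^ 2 := by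
    calc (absΦ (ι x * star (ι x))).re ≤ ‖absΦ (ι x * star (ι x))‖ := Complex.re_le_norm _
      _ ≤ ‖absΦ‖ * ‖ι x * star (ι x)‖ := absΦ.le_opNorm _
      _ ≤ ‖φ‖ * (‖ι x‖ * ‖star (ι x)‖) :=
          mul_le_mul (le_of_eq habsΦnorm) (norm_mul_le _ _) (norm_nonneg _) hφ0
      _ = ‖φ‖ * ‖x‖ ^ 2 := by rw [norm_star, hι]; ring
  have hEnn : 0 ≤ (absΦ (star (u - c) * (u - c))).re :=
    (Complex.nonneg_iff.mp (habsΦpos (u - c))).1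
  have hfnn : 0 ≤ (absΦ (ι x * star (ι x))).re := by
    have := (Complex.nonneg_iff.mp (habsΦpos (star (ι x)))).1
    rwa [star_star] at this
  have hsq : ‖absΦ (ι x * (u - c))‖ ^ 2
      ≤ (Real.sqrt (2 * ‖φ‖) * Real.sqrt (‖δ‖) * ‖x‖) ^ 2 := by
    have h4 : (Real.sqrt (2 * ‖φ‖) * Real.sqrt (‖δ‖) * ‖x‖) ^ 2
        = 2 * ‖φ‖ * ‖δ‖ * ‖x‖ ^ 2 := by
      rw [mul_pow, mul_pow, Real.sq_sqrt (by positivity), Real.sq_sqrt (by positivity)]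
    rw [h4] at *
    calc ‖absΦ (ι x * (u - c))‖ ^ 2
        ≤ (absΦ (ι x * star (ι x))).re * (absΦ (star (u - c) * (u - c))).re := hcs
      _ ≤ (‖φ‖ * ‖x‖ ^ 2) * (2 * ‖δ‖) := by
          apply mul_le_mul hfirst hE hEnn (by positivity)
      _ = 2 * ‖φ‖ * ‖δ‖ * ‖x‖ ^ 2 := by ring
  have hbase : 0 ≤ Real.sqrt (2 * ‖φ‖) * Real.sqrt (‖δ‖) * ‖x‖ := by positivity
  calc ‖absΦ (ι x * (u - c))‖
      = Real.sqrt (‖absΦ (ι x * (u - c))‖ ^ 2) := (Real.sqrt_sq (norm_nonneg _)).symm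
    _ ≤ Real.sqrt ((Real.sqrt (2 * ‖φ‖) * Real.sqrt (‖δ‖) * ‖x‖) ^ 2) :=
        Real.sqrt_le_sqrt hsq
    _ = Real.sqrt (2 * ‖φ‖) * Real.sqrt (‖δ‖) * ‖x‖ := Real.sqrt_sq hbase
end

section
/- Let A be a C*-algebra, φ a bounded linear functional on A, and a an element of the unit ball of A. Then ‖|φ| − a·φ‖ ≤ (2‖φ‖)^{1/2} · |‖φ‖ − φ(a)|^{1/2}, where |φ| is the absolute value of φ from polar decomposition and (a·φ)(x) = φ(xa). -/
open scoped ComplexOrder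


/-- Hermitian symmetry of the form `(x, y) ↦ ψ (star x * y)` for a positive functional. -/
lemma pos_functional_conj_symm {B : Type*} [CStarAlgebra B] (ψ : B →L[ℂ] ℂ)
    (h : ∀ b : B, 0 ≤ ψ (star b * b)) (x y : B) :
    (starRingEnd ℂ) (ψ (star y * x)) = ψ (star x * y) := by
  have him : ∀ b : B, (ψ (star b * b)).im = 0 := fun b => by
    have := (Complex.le_def.mp (h b)).2; simpa using this.symm
  have h1 := him (x + y)
  simp only [star_add, add_mul, mul_add, map_add, Complex.add_im, him x, him y] at h1
  have h2 := him (x + Complex.I • y)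
  simp only [star_add, star_smul, add_mul, mul_add, map_add, map_smul, smul_mul_assoc,
    mul_smul_comm, smul_eq_mul, Complex.star_def, Complex.add_im, Complex.mul_im, him x, him y,
    Complex.conj_I, neg_mul, map_neg, Complex.neg_im, Complex.neg_re, Complex.I_re, Complex.I_im,
    map_mul, Complex.mul_re] at h2
  apply Complex.ext <;> simp [Complex.conj_re, Complex.conj_im] <;> nlinarith [h1, h2]

/-- Cauchy–Schwarz for a positive functional on a C*-algebra. -/
lemma pos_functional_cauchy_schwarz {B : Type*} [CStarAlgebra B] (ψ : B →L[ℂ] ℂ)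
    (h : ∀ b : B, 0 ≤ ψ (star b * b)) (p q : B) :
    ‖ψ (star p * q)‖ ^ 2 ≤ (ψ (star p * p)).re * (ψ (star q * q)).re := by
  letI core : PreInnerProductSpace.Core ℂ B :=
  { inner := fun v w => ψ (star v * w)
    conj_inner_symm := fun v w => pos_functional_conj_symm ψ h v w
    re_inner_nonneg := fun v => by
      have := (Complex.le_def.mp (h v)).1; simpa using this
    add_left := fun v w z => by simp [star_add, add_mul]
    smul_left := fun v w r => by simp [star_smul, smul_mul_assoc] }
  have hcs : ‖ψ (star p * q)‖ * ‖ψ (star q * p)‖ ≤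
      (ψ (star p * p)).re * (ψ (star q * q)).re :=
    InnerProductSpace.Core.inner_mul_inner_self_le (𝕜 := ℂ) (F := B) p q
  have hn : ‖ψ (star q * p)‖ = ‖ψ (star p * q)‖ := by
    rw [← pos_functional_conj_symm ψ h p q]
    exact (RCLike.norm_conj _).symm
  rw [hn, ← sq] at hcs
  exact hcs

/-- For a functional `φ` on a C*-algebra `A` with polar decomposition `φ = u |φ|`
(the partial isometry `u` living in the enveloping von Neumann algebra `A''`,
modelled by a unital C*-algebra `B` in which `A` embeds isometrically and to which
`φ` extends with the same norm), and `a` in the unit ball of `A`: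
`‖|φ| - a·φ‖ ≤ (2‖φ‖)^{1/2} |‖φ‖ - φ(a)|^{1/2}`. -/
theorem norm_absValue_sub_rightMul_le
    {A : Type*} [NonUnitalCStarAlgebra A] {B : Type*} [CStarAlgebra B]
    (ι : A →⋆ₙₐ[ℂ] B) (hι : ∀ x, ‖ι x‖ = ‖x‖)
    (φ absφ : A →L[ℂ] ℂ) (Φ absΦ : B →L[ℂ] ℂ) (u : B)
    (hΦ : ∀ x, Φ (ι x) = φ x) (hΦnorm : ‖Φ‖ = ‖φ‖)
    (hu : u * star u * u = u) (hu1 : ‖u‖ ≤ 1)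
    (habsΦpos : ∀ b : B, 0 ≤ absΦ (star b * b)) (habsΦnorm : ‖absΦ‖ = ‖φ‖)
    (hpolar : ∀ b : B, Φ b = absΦ (b * u))
    (habs : ∀ b : B, absΦ b = Φ (b * star u))
    (habsφ : ∀ x, absφ x = absΦ (ι x))
    (a : A) (ha : ‖a‖ ≤ 1) :
    ‖absφ - rightMulFunctional φ a‖ ≤
      Real.sqrt (2 * ‖φ‖) * Real.sqrt ‖(‖φ‖ : ℂ) - φ a‖ := by
  rcases subsingleton_or_nontrivial B with hB | hB
  · have hφ : φ = 0 := by
      ext x; rw [← hΦ, Subsingleton.elim (ι x) 0]; simp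
    have habs0 : absφ = 0 := by
      ext x; rw [habsφ, Subsingleton.elim (ι x) 0]; simp
    have hz : (0 : A →L[ℂ] ℂ) - rightMulFunctional (0 : A →L[ℂ] ℂ) a = 0 := by
      ext x; simp [rightMulFunctional]
    rw [habs0, hφ, hz, norm_zero]
    positivity
  · set c : B := ι a * u with hc
    set d : ℝ := ‖(‖φ‖ : ℂ) - φ a‖ with hd
    have hd0 : 0 ≤ d := norm_nonneg _
    have hφ0 : 0 ≤ ‖φ‖ := norm_nonneg _
    have hφa : absΦ c = φ a := by rw [hc, ← hpolar, hΦ]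
    have hnc : ‖c‖ ≤ 1 := by
      calc ‖c‖ ≤ ‖ι a‖ * ‖u‖ := norm_mul_le _ _
        _ ≤ 1 * 1 := by
            apply mul_le_mul _ hu1 (norm_nonneg _) zero_le_one
            rw [hι]; exact ha
        _ = 1 := one_mul 1
    -- bound on the second Cauchy-Schwarz factor
    have hzz : (absΦ (star (1 - c) * (1 - c))).re ≤ 2 * d := by
      have hexp : star (1 - c) * (1 - c) = 1 - c - star c + star c * c := by
        simp [star_sub, sub_mul, mul_sub]; abel
      have hstarc : absΦ (star c) = (starRingEnd ℂ) (absΦ c) := by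
        have := pos_functional_conj_symm absΦ habsΦpos c 1
        simpa using this.symm
      have h1 : (absΦ 1).re ≤ ‖φ‖ := by
        calc (absΦ 1).re ≤ ‖absΦ 1‖ := Complex.re_le_norm _
          _ = ‖absΦ 1‖ := rfl
          _ ≤ ‖absΦ‖ * ‖(1 : B)‖ := absΦ.le_opNorm _
          _ = ‖φ‖ := by rw [habsΦnorm, norm_one, mul_one]
      have h2 : (absΦ (star c * c)).re ≤ ‖φ‖ := by
        calc (absΦ (star c * c)).re ≤ ‖absΦ (star c * c)‖ := Complex.re_le_norm _
          _ = ‖absΦ (star c * c)‖ := rfl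
          _ ≤ ‖absΦ‖ * ‖star c * c‖ := absΦ.le_opNorm _
          _ ≤ ‖φ‖ * 1 := by
              rw [habsΦnorm]
              have hcc : ‖star c * c‖ ≤ 1 := by
                calc ‖star c * c‖ ≤ ‖star c‖ * ‖c‖ := norm_mul_le _ _
                  _ ≤ 1 * 1 := by
                      rw [norm_star]
                      exact mul_le_mul hnc hnc (norm_nonneg _) zero_le_one
                  _ = 1 := one_mul 1
              exact mul_le_mul_of_nonneg_left hcc hφ0
          _ = ‖φ‖ := mul_one _
      have h3 : (‖φ‖ : ℝ) - (φ a).re ≤ d := by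
        have : ((‖φ‖ : ℂ) - φ a).re ≤ d := Complex.re_le_norm _
        simpa using this
      rw [hexp]
      simp only [map_add, map_sub, Complex.add_re, Complex.sub_re, hφa, hstarc,
        Complex.conj_re]
      linarith
    -- main estimate via Cauchy-Schwarz
    have hM0 : 0 ≤ Real.sqrt (2 * ‖φ‖) * Real.sqrt d := by positivity
    apply ContinuousLinearMap.opNorm_le_bound _ hM0
    intro x
    have hval : (absφ - rightMulFunctional φ a) x = absΦ (ι x * (1 - c)) := by
      simp only [ContinuousLinearMap.sub_apply, rightMulFunctional,
        ContinuousLinearMap.comp_apply, ContinuousLinearMap.flip_apply,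
        ContinuousLinearMap.mul_apply']
      rw [habsφ, ← hΦ, map_mul, hpolar, mul_sub, mul_one, map_sub, mul_assoc]
    have hcs := pos_functional_cauchy_schwarz absΦ habsΦpos (star (ι x)) (1 - c)
    rw [star_star] at hcs
    have hyy : (absΦ (ι x * star (ι x))).re ≤ ‖φ‖ * (‖x‖ * ‖x‖) := by
      calc (absΦ (ι x * star (ι x))).re ≤ ‖absΦ (ι x * star (ι x))‖ :=
            Complex.re_le_norm _
        _ = ‖absΦ (ι x * star (ι x))‖ := rfl
        _ ≤ ‖absΦ‖ * ‖ι x * star (ι x)‖ := absΦ.le_opNorm _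
        _ ≤ ‖φ‖ * (‖x‖ * ‖x‖) := by
            rw [habsΦnorm]
            have hb : ‖ι x * star (ι x)‖ ≤ ‖x‖ * ‖x‖ := by
              calc ‖ι x * star (ι x)‖ ≤ ‖ι x‖ * ‖star (ι x)‖ := norm_mul_le _ _
                _ = ‖x‖ * ‖x‖ := by rw [norm_star, hι]
            exact mul_le_mul_of_nonneg_left hb hφ0
    have hyy0 : 0 ≤ (absΦ (ι x * star (ι x))).re := by
      have := (Complex.le_def.mp (habsΦpos (star (ι x)))).1
      rw [star_star] at this; simpa using this
    have hsq : ‖absΦ (ι x * (1 - c))‖ ^ 2 ≤ (‖φ‖ * (‖x‖ * ‖x‖)) * (2 * d) := by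
      calc ‖absΦ (ι x * (1 - c))‖ ^ 2
          ≤ (absΦ (ι x * star (ι x))).re * (absΦ (star (1 - c) * (1 - c))).re := hcs
        _ ≤ (‖φ‖ * (‖x‖ * ‖x‖)) * (2 * d) := by
            apply mul_le_mul hyy hzz _ (by positivity)
            have := (Complex.le_def.mp (habsΦpos (1 - c))).1
            simpa using this
    rw [hval]
    calc ‖absΦ (ι x * (1 - c))‖
        = Real.sqrt (‖absΦ (ι x * (1 - c))‖ ^ 2) := (Real.sqrt_sq (norm_nonneg _)).symm
      _ ≤ Real.sqrt ((‖φ‖ * (‖x‖ * ‖x‖)) * (2 * d)) := Real.sqrt_le_sqrt hsq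
      _ = Real.sqrt ((2 * ‖φ‖) * (d * (‖x‖ * ‖x‖))) := by ring_nf
      _ = Real.sqrt (2 * ‖φ‖) * Real.sqrt (d * (‖x‖ * ‖x‖)) := Real.sqrt_mul (by positivity) _
      _ = Real.sqrt (2 * ‖φ‖) * (Real.sqrt d * Real.sqrt (‖x‖ * ‖x‖)) := by
            rw [Real.sqrt_mul hd0]
      _ = Real.sqrt (2 * ‖φ‖) * Real.sqrt d * ‖x‖ := by
            rw [Real.sqrt_mul_self (norm_nonneg _)]; ring
end
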